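/- arXiv:2011.10705 — 2 statements merged into one kernel-verified Lean document; each statement's English description precedes it below -/
import Mathlib

section
/- Under the central-difference discretization of the proposed scalar-transport model on a uniform 1D grid, if 0 ≤ φ_i^k ≤ 1 for all i and k, and the grid size satisfies Δx ≤ 2D/(|u|_max + |u_r|_max + D/ε) and the time step satisfies Δt ≤ Δx²/(2D), then the coefficient C̃_{i-1}^k = Δt u_{i-1}^k/(2Δx) + Δt u_{r,i-1}^k φ_{i-1}^k/(2Δx) + Δt D/Δx² + (Δt D/(2εΔx))(1-φ_{i-1}^k) n_{i-1}^k is nonnegative, where n_{i-1}^k ∈ [-1,1]. -/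
theorem coefficient_im1_nonneg
    (D ε Δx Δt umax urmax : ℝ)
    (hD : 0 < D) (hε : 0 < ε) (hΔx : 0 < Δx) (hΔt : 0 < Δt)
    (u ur φ n : ℝ)
    (hu : |u| ≤ umax) (hur : |ur| ≤ urmax)
    (hφ0 : 0 ≤ φ) (hφ1 : φ ≤ 1) (hn : n ∈ Set.Icc (-1 : ℝ) 1)
    (hgrid : Δx ≤ 2 * D / (umax + urmax + D / ε))
    (htime : Δt ≤ Δx ^ 2 / (2 * D)) :
    0 ≤ Δt * u / (2 * Δx) + Δt * ur * φ / (2 * Δx) + Δt * D / Δx ^ 2 +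
        (Δt * D / (2 * ε * Δx)) * (1 - φ) * n := by
  obtain ⟨hn1, hn2⟩ := hn
  obtain ⟨hu1, hu2⟩ := abs_le.mp hu
  obtain ⟨hur1, hur2⟩ := abs_le.mp hur
  have humax : 0 ≤ umax := (abs_nonneg u).trans hu
  have hurmax : 0 ≤ urmax := (abs_nonneg ur).trans hur
  have hS : 0 < umax + urmax + D / ε := by positivity
  have hgrid' : Δx * (umax + urmax + D / ε) ≤ 2 * D :=
    (le_div_iff₀ hS).mp hgrid
  have hgrid'' : Δx * ε * (umax + urmax) + Δx * D ≤ 2 * D * ε := by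
    have := mul_le_mul_of_nonneg_right hgrid' hε.le
    have hεne : ε ≠ 0 := ne_of_gt hε
    field_simp at this
    nlinarith [this]
  have hurφ : -urmax ≤ ur * φ := by nlinarith
  have hnφ : -(1 : ℝ) ≤ (1 - φ) * n := by nlinarith
  have hc : (0:ℝ) ≤ ε * Δx * Δt := by positivity
  have a1 := mul_le_mul_of_nonneg_left hu1 hc
  have a2 := mul_le_mul_of_nonneg_left hurφ hc
  have a3 := mul_le_mul_of_nonneg_left hnφ (by positivity : (0:ℝ) ≤ Δx * Δt * D)
  have a4 := mul_le_mul_of_nonneg_left hgrid'' hΔt.le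
  have key : 0 ≤ ε * Δx * (Δt * u) + ε * Δx * (Δt * ur * φ) + 2 * ε * (Δt * D) +
      Δx * (Δt * D) * ((1 - φ) * n) := by nlinarith [a1, a2, a3, a4]
  have h2 : 0 < 2 * ε * Δx ^ 2 := by positivity
  rw [div_add_div _ _ (by positivity) (by positivity), div_add_div _ _ (by positivity) (by positivity)]
  have : Δt * D / (2 * ε * Δx) * (1 - φ) * n = Δt * D * ((1 - φ) * n) / (2 * ε * Δx) := by ring
  rw [this, div_add_div _ _ (by positivity) (by positivity)]
  apply div_nonneg _ (by positivity)
  nlinarith [mul_nonneg (by positivity : (0:ℝ) ≤ 4 * Δx ^ 3) key]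
end

section
/- Under the same hypotheses (Δx ≤ 2D/(|u|_max + |u_r|_max + D/ε), Δt ≤ Δx²/(2D), φ values in [0,1], normal values in [-1,1], velocities bounded by |u|_max and |u_r|_max), all three stencil coefficients C̃_{i-1}^k, C̃_i^k = 1 - 2ΔtD/Δx², and C̃_{i+1}^k = -Δt u_{i+1}^k/(2Δx) - Δt u_{r,i+1}^k φ_{i+1}^k/(2Δx) + ΔtD/Δx² - (ΔtD/(2εΔx))(1-φ_{i+1}^k) n_{i+1}^k are nonnegative; consequently, if c_i^0 ≥ 0 for all i, then c_i^k ≥ 0 for all i and all k ∈ ℕ. -/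
lemma key_stencil (D ε Δx Δt umax urmax a r p m : ℝ)
    (hD : 0 < D) (hε : 0 < ε) (hΔx : 0 < Δx) (hΔt : 0 < Δt)
    (ha : -umax ≤ a) (hr : -urmax ≤ r) (hru : 0 ≤ urmax)
    (hp0 : 0 ≤ p) (hp1 : p ≤ 1) (hm : -1 ≤ m)
    (hgrid : Δx * (umax + urmax + D / ε) ≤ 2 * D) :
    0 ≤ Δt * a / (2 * Δx) + Δt * r * p / (2 * Δx) + Δt * D / Δx ^ 2 +
      (Δt * D / (2 * ε * Δx)) * (1 - p) * m := by
  have hA : 0 < Δt / (2 * Δx) := by positivity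
  have h1 : Δt * a / (2 * Δx) ≥ (Δt / (2 * Δx)) * (-umax) := by
    have e : Δt * a / (2 * Δx) = (Δt / (2 * Δx)) * a := by ring
    rw [e]; exact mul_le_mul_of_nonneg_left ha hA.le
  have hrp : -urmax ≤ r * p := by
    nlinarith
  have h2 : Δt * r * p / (2 * Δx) ≥ (Δt / (2 * Δx)) * (-urmax) := by
    have e : Δt * r * p / (2 * Δx) = (Δt / (2 * Δx)) * (r * p) := by ring
    rw [e]; exact mul_le_mul_of_nonneg_left hrp hA.le
  have h3 : (Δt * D / (2 * ε * Δx)) * (1 - p) * m ≥ (Δt / (2 * Δx)) * (-(D / ε)) := by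
    have hc : 0 < Δt * D / (2 * ε * Δx) := by positivity
    have : (1 - p) * m ≥ -1 := by nlinarith
    have h4 : (Δt * D / (2 * ε * Δx)) * (1 - p) * m ≥ (Δt * D / (2 * ε * Δx)) * (-1) := by
      nlinarith
    have h5 : (Δt * D / (2 * ε * Δx)) * (-1) = (Δt / (2 * Δx)) * (-(D / ε)) := by
      field_simp
    linarith
  have h6 : Δt * D / Δx ^ 2 ≥ (Δt / (2 * Δx)) * (umax + urmax + D / ε) := by
    rw [ge_iff_le]
    have : (Δt / (2 * Δx)) * (umax + urmax + D / ε) ≤ (Δt / (2 * Δx)) * (2 * D / Δx) := by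
      apply mul_le_mul_of_nonneg_left _ (le_of_lt hA)
      rw [le_div_iff₀ hΔx]
      linarith
    have heq : (Δt / (2 * Δx)) * (2 * D / Δx) = Δt * D / Δx ^ 2 := by
      field_simp
    linarith [heq ▸ this]
  nlinarith [h1, h2, h3, h6]

theorem positivity_theorem
    (D ε Δx Δt umax urmax : ℝ)
    (hD : 0 < D) (hε : 0 < ε) (hΔx : 0 < Δx) (hΔt : 0 < Δt)
    (u ur φ n : ℕ → ℤ → ℝ)
    (hu : ∀ k i, |u k i| ≤ umax) (hur : ∀ k i, |ur k i| ≤ urmax)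
    (hφ : ∀ k i, φ k i ∈ Set.Icc (0 : ℝ) 1)
    (hn : ∀ k i, n k i ∈ Set.Icc (-1 : ℝ) 1)
    (hgrid : Δx ≤ 2 * D / (umax + urmax + D / ε))
    (htime : Δt ≤ Δx ^ 2 / (2 * D))
    (Cm Cc Cp : ℕ → ℤ → ℝ)
    (hCm : ∀ k i, Cm k i = Δt * u k (i - 1) / (2 * Δx) +
        Δt * ur k (i - 1) * φ k (i - 1) / (2 * Δx) + Δt * D / Δx ^ 2 +
        (Δt * D / (2 * ε * Δx)) * (1 - φ k (i - 1)) * n k (i - 1))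
    (hCc : ∀ k i, Cc k i = 1 - 2 * Δt * D / Δx ^ 2)
    (hCp : ∀ k i, Cp k i = -(Δt * u k (i + 1) / (2 * Δx)) -
        Δt * ur k (i + 1) * φ k (i + 1) / (2 * Δx) + Δt * D / Δx ^ 2 -
        (Δt * D / (2 * ε * Δx)) * (1 - φ k (i + 1)) * n k (i + 1))
    (c : ℕ → ℤ → ℝ)
    (hupd : ∀ k i, c (k + 1) i =
      Cm k i * c k (i - 1) + Cc k i * c k i + Cp k i * c k (i + 1))
    (h0 : ∀ i, 0 ≤ c 0 i) :
    (∀ k i, 0 ≤ Cm k i ∧ 0 ≤ Cc k i ∧ 0 ≤ Cp k i) ∧ ∀ k i, 0 ≤ c k i := by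
  have humax : 0 ≤ umax := le_trans (abs_nonneg _) (hu 0 0)
  have hurmax : 0 ≤ urmax := le_trans (abs_nonneg _) (hur 0 0)
  have hS : 0 < umax + urmax + D / ε := by positivity
  have hgrid' : Δx * (umax + urmax + D / ε) ≤ 2 * D := by
    rw [le_div_iff₀ hS] at hgrid; linarith
  have hcoef : ∀ k i, 0 ≤ Cm k i ∧ 0 ≤ Cc k i ∧ 0 ≤ Cp k i := by
    intro k i
    refine ⟨?_, ?_, ?_⟩
    · rw [hCm]
      exact key_stencil D ε Δx Δt umax urmax (u k (i-1)) (ur k (i-1)) (φ k (i-1))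
        (n k (i-1)) hD hε hΔx hΔt (neg_le_of_abs_le (hu k (i-1)))
        (neg_le_of_abs_le (hur k (i-1))) hurmax (hφ k (i-1)).1 (hφ k (i-1)).2
        (hn k (i-1)).1 hgrid'
    · rw [hCc]
      have : 2 * Δt * D ≤ Δx ^ 2 := by
        rw [le_div_iff₀ (by positivity)] at htime; linarith
      have h2 : 2 * Δt * D / Δx ^ 2 ≤ 1 := by
        rw [div_le_one (by positivity)]; linarith
      linarith
    · have hk := key_stencil D ε Δx Δt umax urmax (-u k (i+1)) (-ur k (i+1))
        (φ k (i+1)) (-n k (i+1)) hD hε hΔx hΔt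
        (by have := le_abs_self (u k (i+1)); have := hu k (i+1); linarith)
        (by have := le_abs_self (ur k (i+1)); have := hur k (i+1); linarith)
        hurmax (hφ k (i+1)).1 (hφ k (i+1)).2
        (by have := (hn k (i+1)).2; linarith) hgrid'
      have heq : Cp k i = Δt * (-u k (i+1)) / (2 * Δx) +
          Δt * (-ur k (i+1)) * φ k (i+1) / (2 * Δx) + Δt * D / Δx ^ 2 +
          (Δt * D / (2 * ε * Δx)) * (1 - φ k (i+1)) * (-n k (i+1)) := by
        rw [hCp]; ring
      rw [heq]; exact hk
  refine ⟨hcoef, ?_⟩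
  intro k
  induction k with
  | zero => exact h0
  | succ k ih =>
    intro i
    rw [hupd]
    have h := hcoef k i
    exact add_nonneg (add_nonneg (mul_nonneg h.1 (ih _)) (mul_nonneg h.2.1 (ih _)))
      (mul_nonneg h.2.2 (ih _))
end
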